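/- Let (R,d) be a metric space with base point 0, F : R → ℝ lower semicontinuous, F̄ its greatest d-lsc extension to the completion R̄, and G a group acting on R by isometries with F G-invariant. Assume the compactness property: any sequence u_j ∈ R̄ with F̄(u_j) → inf F̄ and d(0,u_j) bounded has a subsequence converging to a minimizer. If there exist C, D > 0 with F(u) ≥ C·d_G(G·0, Gu) − D for all u ∈ R, then F̄ attains its infimum on R̄ (the set of minimizers is nonempty). -/

import Mathlib

open UniformSpace Filter Topology

/-- The direction "properness ⇒ existence of minimizers" of the general
existence/properness principle: if `F` is `G`-invariant, lower semicontinuous,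
satisfies the compactness property (P2), and is `d_G`-proper, then its greatest lsc
extension `F̄` attains its infimum on the completion. -/
theorem properness_implies_existence
    {R : Type*} [MetricSpace R] {G : Type*} [Group G] [MulAction G R]
    (o : R)  -- base point `0 ∈ R`
    (hiso : ∀ (g : G) (u v : R), dist (g • u) (g • v) = dist u v)
    (dG : R → R → ℝ)
    (hdG : ∀ u v : R, dG u v = sInf {r : ℝ | ∃ f g : G, r = dist (f • u) (g • v)})
    (F : R → ℝ) (hlsc : LowerSemicontinuous F)
    (Fbar : Completion R → EReal)
    (hFbar : ∀ u : Completion R, Fbar u =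
      ⨆ (ε : ℝ) (_ : 0 < ε),
        ⨅ (v : R) (_ : dist u (v : Completion R) ≤ ε), (F v : EReal))
    (hinv : ∀ (g : G) (u : R), F (g • u) = F u)
    -- (P2): bounded minimizing sequences subconverge to a minimizer
    (hP2 : ∀ u : ℕ → Completion R,
      Filter.Tendsto (fun j => Fbar (u j)) Filter.atTop
        (nhds (⨅ w : Completion R, Fbar w)) →
      (∃ C : ℝ, ∀ j, dist ((o : Completion R)) (u j) ≤ C) →
      ∃ (m : Completion R) (φ : ℕ → ℕ), StrictMono φ ∧
        (∀ w : Completion R, Fbar m ≤ Fbar w) ∧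
        Filter.Tendsto (fun k => u (φ k)) Filter.atTop (nhds m))
    -- properness: `F(u) ≥ C ⬝ d_G(G0, Gu) − D`
    (C D : ℝ) (hC : 0 < C) (hD : 0 < D)
    (hproper : ∀ u : R, F u ≥ C * dG o u - D) :
    ∃ m : Completion R, ∀ w : Completion R, Fbar m ≤ Fbar w := by
  classical
  -- `dG` is nonnegative
  have hdG_nonneg : ∀ u : R, 0 ≤ dG o u := by
    intro u
    rw [hdG]
    apply Real.sInf_nonneg
    rintro r ⟨f, g, rfl⟩
    exact dist_nonneg
  -- `F` is bounded below by `-D`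
  have hFlb : ∀ u : R, -D ≤ F u := by
    intro u
    have := hproper u
    nlinarith [hdG_nonneg u]
  -- the real infimum of `F`
  set m : ℝ := sInf (Set.range F) with hm
  have hne : (Set.range F).Nonempty := ⟨F o, o, rfl⟩
  have hbdd : BddBelow (Set.range F) := ⟨-D, by rintro r ⟨u, rfl⟩; exact hFlb u⟩
  have hm_le : ∀ u : R, m ≤ F u := fun u => csInf_le hbdd ⟨u, rfl⟩
  -- Fbar ≤ F on R
  have hFbar_le : ∀ v : R, Fbar (v : Completion R) ≤ (F v : EReal) := by
    intro v
    rw [hFbar]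
    refine iSup₂_le fun ε hε => ?_
    refine iInf₂_le_of_le v ?_ le_rfl
    rw [UniformSpace.Completion.dist_eq, dist_self]
    exact le_of_lt hε
  -- m ≤ Fbar everywhere
  have hFbar_ge : ∀ u : Completion R, (m : EReal) ≤ Fbar u := by
    intro u
    rw [hFbar]
    refine le_trans ?_ (le_iSup₂ (f := fun (ε : ℝ) (_ : 0 < ε) =>
      ⨅ (v : R) (_ : dist u (v : Completion R) ≤ ε), (F v : EReal)) 1 one_pos)
    exact le_iInf₂ fun v _ => EReal.coe_le_coe_iff.2 (hm_le v)
  -- choose a minimizing sequence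
  have hseq : ∀ j : ℕ, ∃ v : R, F v ≤ m + 1 / (j + 1) ∧
      dist o v ≤ (m + 1 + D) / C + 1 := by
    intro j
    have hpos : (0 : ℝ) < 1 / (j + 1) := by positivity
    obtain ⟨r, ⟨u, rfl⟩, hr⟩ := Real.lt_sInf_add_pos hne hpos
    have hdGu : dG o u ≤ (m + 1 + D) / C := by
      have h1 : C * dG o u ≤ F u + D := by linarith [hproper u]
      have h2 : F u ≤ m + 1 := by
        have : 1 / ((j : ℝ) + 1) ≤ 1 := by
          rw [div_le_one (by positivity)]; linarith [Nat.cast_nonneg (α := ℝ) j]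
        linarith
      rw [le_div_iff₀ hC]
      nlinarith
    -- choose group elements nearly realizing `dG`
    have hSne : {r : ℝ | ∃ f g : G, r = dist (f • o) (g • u)}.Nonempty :=
      ⟨dist ((1 : G) • o) ((1 : G) • u), 1, 1, rfl⟩
    obtain ⟨r, ⟨f, g, rfl⟩, hlt⟩ := Real.lt_sInf_add_pos hSne one_pos
    rw [← hdG] at hlt
    refine ⟨(f⁻¹ * g) • u, ?_, ?_⟩
    · rw [hinv]; exact le_of_lt hr
    · have : dist o ((f⁻¹ * g) • u) = dist (f • o) (g • u) := by
        rw [← hiso f o ((f⁻¹ * g) • u), smul_smul]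
        simp [mul_assoc]
      rw [this]
      linarith
  choose v hv1 hv2 using hseq
  -- F (v j) → m
  have htendF : Tendsto (fun j => F (v j)) atTop (nhds m) := by
    have hupper : Tendsto (fun j : ℕ => m + 1 / (j + 1)) atTop (nhds m) := by
      have : Tendsto (fun n : ℕ => 1 / ((n : ℝ) + 1)) atTop (nhds 0) :=
        tendsto_one_div_add_atTop_nhds_zero_nat
      have h := tendsto_const_nhds (x := m) (f := atTop (α := ℕ)) |>.add this
      simpa using h
    exact tendsto_of_tendsto_of_tendsto_of_le_of_le tendsto_const_nhds hupper
      (fun j => hm_le (v j)) (fun j => hv1 j)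
  -- Fbar (v j) → m in EReal
  have htendFbar : Tendsto (fun j => Fbar ((v j : Completion R))) atTop
      (nhds (m : EReal)) := by
    have hupper : Tendsto (fun j => ((F (v j) : ℝ) : EReal)) atTop (nhds (m : EReal)) := by
      exact (EReal.tendsto_coe).2 htendF
    exact tendsto_of_tendsto_of_tendsto_of_le_of_le tendsto_const_nhds hupper
      (fun j => hFbar_ge _) (fun j => hFbar_le _)
  -- the infimum of Fbar equals m
  have hI : (⨅ w : Completion R, Fbar w) = (m : EReal) := by
    refine le_antisymm ?_ (le_iInf hFbar_ge)
    exact ge_of_tendsto htendFbar (Filter.Eventually.of_forall fun j =>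
      iInf_le Fbar ((v j : Completion R)))
  -- apply (P2)
  obtain ⟨mz, φ, hφ, hmin, _⟩ := hP2 (fun j => (v j : Completion R))
    (by rw [hI]; exact htendFbar)
    ⟨(m + 1 + D) / C + 1, fun j => by
      rw [UniformSpace.Completion.dist_eq]; exact hv2 j⟩
  exact ⟨mz, hmin⟩
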